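/- (Generalized monkey saddle) Let n be an integer with n ≥ 2 and define f : ℝ² → ℝ by f(x,y) := Re((x + iy)^n), the real part of the n-th power of the complex number x + iy. Then f has a strict saddle point at (0,0). -/

import Mathlib

open Set Filter Topology

/-- `γ : [a, b] → D` is a regular path in `D`: it is continuous on `[a, b]`, maps `[a, b]`
into `D`, is differentiable on `(a, b)`, and its derivative is nonvanishing on `(a, b)`. -/
def IsRegularPath (D : Set (ℝ × ℝ)) (γ : ℝ → ℝ × ℝ) (a b : ℝ) : Prop :=
  a < b ∧ ContinuousOn γ (Set.Icc a b) ∧ Set.MapsTo γ (Set.Icc a b) D ∧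
    ∀ t ∈ Set.Ioo a b, DifferentiableAt ℝ γ t ∧ deriv γ t ≠ 0

/-- A function of one real variable has a strict local maximum at `t`. -/
def IsStrictLocalMax (g : ℝ → ℝ) (t : ℝ) : Prop :=
  ∀ᶠ s in 𝓝[≠] t, g s < g t

/-- A function of one real variable has a strict local minimum at `t`. -/
def IsStrictLocalMin (g : ℝ → ℝ) (t : ℝ) : Prop :=
  ∀ᶠ s in 𝓝[≠] t, g t < g s

/-- `f` has a saddle point at `p`: there are regular paths `γ₁, γ₂` in `D` passing through `p`
and intersecting transversally at `p` (their tangent vectors at `p` are not multiples of each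
other) such that `f` has a local maximum at `p` along `γ₁` and a local minimum at `p`
along `γ₂`. -/
def HasSaddleAt (D : Set (ℝ × ℝ)) (f : ℝ × ℝ → ℝ) (p : ℝ × ℝ) : Prop :=
  ∃ (a₁ b₁ a₂ b₂ t₁ t₂ : ℝ) (γ₁ γ₂ : ℝ → ℝ × ℝ),
    IsRegularPath D γ₁ a₁ b₁ ∧ IsRegularPath D γ₂ a₂ b₂ ∧
    t₁ ∈ Set.Ioo a₁ b₁ ∧ t₂ ∈ Set.Ioo a₂ b₂ ∧ γ₁ t₁ = p ∧ γ₂ t₂ = p ∧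
    (∀ c : ℝ, deriv γ₁ t₁ ≠ c • deriv γ₂ t₂) ∧
    (∀ c : ℝ, deriv γ₂ t₂ ≠ c • deriv γ₁ t₁) ∧
    IsLocalMax (f ∘ γ₁) t₁ ∧ IsLocalMin (f ∘ γ₂) t₂

/-- `f` has a strict saddle point at `p`: as for a saddle point, but with a strict local
maximum along `γ₁` and a strict local minimum along `γ₂`. -/
def HasStrictSaddleAt (D : Set (ℝ × ℝ)) (f : ℝ × ℝ → ℝ) (p : ℝ × ℝ) : Prop :=
  ∃ (a₁ b₁ a₂ b₂ t₁ t₂ : ℝ) (γ₁ γ₂ : ℝ → ℝ × ℝ),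
    IsRegularPath D γ₁ a₁ b₁ ∧ IsRegularPath D γ₂ a₂ b₂ ∧
    t₁ ∈ Set.Ioo a₁ b₁ ∧ t₂ ∈ Set.Ioo a₂ b₂ ∧ γ₁ t₁ = p ∧ γ₂ t₂ = p ∧
    (∀ c : ℝ, deriv γ₁ t₁ ≠ c • deriv γ₂ t₂) ∧
    (∀ c : ℝ, deriv γ₂ t₂ ≠ c • deriv γ₁ t₁) ∧
    IsStrictLocalMax (f ∘ γ₁) t₁ ∧ IsStrictLocalMin (f ∘ γ₂) t₂


/-- The spiral path used in the construction. -/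
noncomputable def msPath (n : ℕ) (θ : ℝ) (t : ℝ) : ℝ × ℝ :=
  (t * Real.cos (θ + t ^ n), t * Real.sin (θ + t ^ n))

lemma msPath_hasDerivAt (n : ℕ) (θ t : ℝ) :
    HasDerivAt (msPath n θ)
      (Real.cos (θ + t ^ n) - t * (Real.sin (θ + t ^ n) * (n * t ^ (n-1))),
       Real.sin (θ + t ^ n) + t * (Real.cos (θ + t ^ n) * (n * t ^ (n-1)))) t := by
  have hφ : HasDerivAt (fun t : ℝ => θ + t ^ n) ((n : ℝ) * t ^ (n-1)) t := by
    simpa using (hasDerivAt_pow n t).const_add θ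
  have hc : HasDerivAt (fun t : ℝ => t * Real.cos (θ + t ^ n))
      (Real.cos (θ + t ^ n) - t * (Real.sin (θ + t ^ n) * ((n : ℝ) * t ^ (n-1)))) t := by
    have := (hasDerivAt_id t).mul (((Real.hasDerivAt_cos (θ + t ^ n)).comp t hφ))
    convert this using 1 <;> first | rfl | (simp only [id, Function.comp]; ring)
  have hs : HasDerivAt (fun t : ℝ => t * Real.sin (θ + t ^ n))
      (Real.sin (θ + t ^ n) + t * (Real.cos (θ + t ^ n) * ((n : ℝ) * t ^ (n-1)))) t := by
    have := (hasDerivAt_id t).mul (((Real.hasDerivAt_sin (θ + t ^ n)).comp t hφ))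
    convert this using 1 <;> first | rfl | (simp only [id, Function.comp]; ring)
  exact hc.prodMk hs

lemma msPath_deriv_ne_zero (n : ℕ) (θ t : ℝ) : deriv (msPath n θ) t ≠ 0 := by
  rw [(msPath_hasDerivAt n θ t).deriv]
  intro h
  rw [Prod.ext_iff] at h
  obtain ⟨h1, h2⟩ := h
  simp only [Prod.fst_zero, Prod.snd_zero] at h1 h2
  have hpy : Real.sin (θ + t ^ n) ^ 2 + Real.cos (θ + t ^ n) ^ 2 = 1 :=
    Real.sin_sq_add_cos_sq _
  have e1 := mul_eq_zero_of_left h1 (Real.cos (θ + t ^ n))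
  have e2 := mul_eq_zero_of_left h2 (Real.sin (θ + t ^ n))
  nlinarith [e1, e2, hpy]

lemma msPath_deriv_zero (n : ℕ) (hn : 2 ≤ n) (θ : ℝ) :
    deriv (msPath n θ) 0 = (Real.cos θ, Real.sin θ) := by
  rw [(msPath_hasDerivAt n θ 0).deriv]
  have h1 : (0:ℝ) ^ n = 0 := zero_pow (by omega)
  have h2 : (0:ℝ) ^ (n-1) = 0 := zero_pow (by omega)
  simp [h1, h2]

lemma msPath_f (n : ℕ) (θ t : ℝ) :
    ((((msPath n θ t).1 : ℂ) + ((msPath n θ t).2 : ℂ) * Complex.I) ^ n).re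
      = t ^ n * Real.cos (n * (θ + t ^ n)) := by
  have : (((msPath n θ t).1 : ℂ) + ((msPath n θ t).2 : ℂ) * Complex.I)
      = (t : ℂ) * Complex.exp ((θ + t ^ n : ℝ) * Complex.I) := by
    rw [Complex.exp_mul_I]
    push_cast [msPath]
    ring
  rw [this, mul_pow, ← Complex.exp_nat_mul]
  have : ((n : ℂ) * ((θ + t ^ n : ℝ) * Complex.I)) = ((n * (θ + t ^ n) : ℝ) : ℂ) * Complex.I := by
    push_cast; ring
  rw [this]
  rw [show ((t:ℂ))^n = ((t^n : ℝ) : ℂ) by push_cast; ring]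
  rw [Complex.re_ofReal_mul, Complex.exp_ofReal_mul_I_re]

lemma ms_sign (n : ℕ) (hn : 1 ≤ n) (u : ℝ) (hu : u ≠ 0) (h : (n : ℝ) * |u| < Real.pi) :
    0 < u * Real.sin ((n : ℝ) * u) := by
  have hn' : (0:ℝ) < n := by exact_mod_cast hn
  rcases hu.lt_or_gt with h0 | h0
  · have hpos : 0 < Real.sin ((n : ℝ) * (-u)) := by
      apply Real.sin_pos_of_pos_of_lt_pi
      · have : 0 < -u := neg_pos.mpr h0
        positivity
      · rwa [abs_of_neg h0] at h
    have : Real.sin ((n : ℝ) * u) = -Real.sin ((n : ℝ) * (-u)) := by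
      rw [show (n:ℝ) * u = -((n:ℝ) * (-u)) by ring, Real.sin_neg]
    rw [this]; nlinarith
  · have hpos : 0 < Real.sin ((n : ℝ) * u) := by
      apply Real.sin_pos_of_pos_of_lt_pi
      · positivity
      · rwa [abs_of_pos h0] at h
    positivity

lemma ms_small (n : ℕ) (hn : 2 ≤ n) (s : ℝ) (hs : |s| < ((n:ℝ))⁻¹) :
    (n : ℝ) * |s ^ n| < Real.pi := by
  have hn' : (0:ℝ) < n := by positivity
  have h1 : |s| ≤ 1 := by
    have : ((n:ℝ))⁻¹ ≤ 1 := by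
      rw [inv_le_one_iff₀]; right; exact_mod_cast Nat.one_le_of_lt hn
    linarith
  have h2 : |s ^ n| ≤ |s| := by
    rw [abs_pow]
    exact pow_le_of_le_one (abs_nonneg s) h1 (by omega)
  have h3 : (n : ℝ) * |s| < 1 := by
    calc (n:ℝ) * |s| < (n:ℝ) * (n:ℝ)⁻¹ := by
          exact mul_lt_mul_of_pos_left hs hn'
      _ = 1 := mul_inv_cancel₀ (ne_of_gt hn')
  have : (n : ℝ) * |s ^ n| ≤ (n:ℝ) * |s| := mul_le_mul_of_nonneg_left h2 (le_of_lt hn')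
  linarith [Real.pi_gt_three]

lemma ms_cont (n : ℕ) (θ : ℝ) : Continuous (msPath n θ) := by
  unfold msPath; fun_prop

lemma ms_cos_shift (x : ℝ) : Real.cos (Real.pi/2 + x) = -Real.sin x := by
  simp [Real.cos_add]

lemma ms_cos_shift' (x : ℝ) : Real.cos (-(Real.pi/2) + x) = Real.sin x := by
  simp [Real.cos_add]

lemma ms_regular (n : ℕ) (hn : 2 ≤ n) (θ : ℝ) (a b : ℝ) (hab : a < b) :
    (a < b ∧ ContinuousOn (msPath n θ) (Set.Icc a b) ∧
      Set.MapsTo (msPath n θ) (Set.Icc a b) Set.univ ∧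
      ∀ t ∈ Set.Ioo a b, DifferentiableAt ℝ (msPath n θ) t ∧ deriv (msPath n θ) t ≠ 0) :=
  ⟨hab, (ms_cont n θ).continuousOn, Set.mapsTo_univ _ _,
    fun t _ => ⟨(msPath_hasDerivAt n θ t).differentiableAt, msPath_deriv_ne_zero n θ t⟩⟩

theorem generalized_monkey_saddle_aux (n : ℕ) (hn : 2 ≤ n) :
    (∃ (a₁ b₁ a₂ b₂ t₁ t₂ : ℝ) (γ₁ γ₂ : ℝ → ℝ × ℝ),
    (a₁ < b₁ ∧ ContinuousOn γ₁ (Set.Icc a₁ b₁) ∧ Set.MapsTo γ₁ (Set.Icc a₁ b₁) Set.univ ∧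
      ∀ t ∈ Set.Ioo a₁ b₁, DifferentiableAt ℝ γ₁ t ∧ deriv γ₁ t ≠ 0) ∧
    (a₂ < b₂ ∧ ContinuousOn γ₂ (Set.Icc a₂ b₂) ∧ Set.MapsTo γ₂ (Set.Icc a₂ b₂) Set.univ ∧
      ∀ t ∈ Set.Ioo a₂ b₂, DifferentiableAt ℝ γ₂ t ∧ deriv γ₂ t ≠ 0) ∧
    t₁ ∈ Set.Ioo a₁ b₁ ∧ t₂ ∈ Set.Ioo a₂ b₂ ∧ γ₁ t₁ = ((0:ℝ),(0:ℝ)) ∧ γ₂ t₂ = ((0:ℝ),(0:ℝ)) ∧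
    (∀ c : ℝ, deriv γ₁ t₁ ≠ c • deriv γ₂ t₂) ∧
    (∀ c : ℝ, deriv γ₂ t₂ ≠ c • deriv γ₁ t₁) ∧
    (∀ᶠ s in 𝓝[≠] t₁,
      ((fun q : ℝ × ℝ => (((q.1 : ℂ) + (q.2 : ℂ) * Complex.I) ^ n).re) ∘ γ₁) s <
      ((fun q : ℝ × ℝ => (((q.1 : ℂ) + (q.2 : ℂ) * Complex.I) ^ n).re) ∘ γ₁) t₁) ∧
    (∀ᶠ s in 𝓝[≠] t₂,
      ((fun q : ℝ × ℝ => (((q.1 : ℂ) + (q.2 : ℂ) * Complex.I) ^ n).re) ∘ γ₂) t₂ <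
      ((fun q : ℝ × ℝ => (((q.1 : ℂ) + (q.2 : ℂ) * Complex.I) ^ n).re) ∘ γ₂) s)) := by
  have hn0 : (0:ℝ) < n := by positivity
  set θ₁ : ℝ := Real.pi / (2 * n) with hθ₁
  have hθpos : 0 < θ₁ := by positivity
  have hθlt : θ₁ < Real.pi / 2 := by
    rw [hθ₁, div_lt_div_iff₀ (by positivity) (by norm_num)]
    have : (2:ℝ) < 2 * n := by
      have : (2:ℝ) ≤ (n:ℝ) := by exact_mod_cast hn
      nlinarith [Real.pi_pos]
    nlinarith [Real.pi_pos]
  have hcos : 0 < Real.cos θ₁ := Real.cos_pos_of_mem_Ioo ⟨by linarith [Real.pi_pos], hθlt⟩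
  have hsin : 0 < Real.sin θ₁ :=
    Real.sin_pos_of_pos_of_lt_pi hθpos (by linarith [Real.pi_pos])
  have hmul : (n:ℝ) * θ₁ = Real.pi / 2 := by
    rw [hθ₁]; field_simp
  set δ : ℝ := ((n:ℝ))⁻¹ with hδ
  have hδpos : 0 < δ := by positivity
  refine ⟨-δ, δ, -δ, δ, 0, 0, msPath n θ₁, msPath n (-θ₁),
    ms_regular n hn θ₁ _ _ (by linarith),
    ms_regular n hn (-θ₁) _ _ (by linarith),
    ⟨by linarith, hδpos⟩, ⟨by linarith, hδpos⟩,
    by simp [msPath], by simp [msPath], ?_, ?_, ?_, ?_⟩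
  · intro c
    rw [msPath_deriv_zero n hn, msPath_deriv_zero n hn, Real.cos_neg, Real.sin_neg]
    intro h
    rw [Prod.ext_iff] at h
    obtain ⟨h1, h2⟩ := h
    simp only [Prod.smul_fst, Prod.smul_snd, smul_eq_mul] at h1 h2
    have hc1 : c = 1 := by
      have h1' : c * Real.cos θ₁ = 1 * Real.cos θ₁ := by linarith
      exact mul_right_cancel₀ (ne_of_gt hcos) h1'
    rw [hc1] at h2
    nlinarith
  · intro c
    rw [msPath_deriv_zero n hn, msPath_deriv_zero n hn, Real.cos_neg, Real.sin_neg]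
    intro h
    rw [Prod.ext_iff] at h
    obtain ⟨h1, h2⟩ := h
    simp only [Prod.smul_fst, Prod.smul_snd, smul_eq_mul] at h1 h2
    have hc1 : c = 1 := by
      have h1' : c * Real.cos θ₁ = 1 * Real.cos θ₁ := by linarith
      exact mul_right_cancel₀ (ne_of_gt hcos) h1'
    rw [hc1] at h2
    nlinarith
  · -- strict local max along γ₁
    have hmem : Set.Ioo (-δ) δ ∈ 𝓝 (0:ℝ) := Ioo_mem_nhds (by linarith) hδpos
    filter_upwards [mem_nhdsWithin_of_mem_nhds hmem, self_mem_nhdsWithin] with s hs hs0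
    have hs0' : s ≠ 0 := hs0
    simp only [Function.comp_apply, msPath_f]
    have h0 : ((0:ℝ)) ^ n * Real.cos ((n:ℝ) * (θ₁ + 0 ^ n)) = 0 := by
      rw [zero_pow (by omega)]; ring
    rw [h0]
    have habs : |s| < δ := abs_lt.mpr ⟨hs.1, hs.2⟩
    have hsmall := ms_small n hn s habs
    have hsign := ms_sign n (by omega) (s ^ n) (pow_ne_zero n hs0') hsmall
    have : (n:ℝ) * (θ₁ + s ^ n) = Real.pi / 2 + (n:ℝ) * s ^ n := by
      rw [mul_add, hmul]
    rw [this, ms_cos_shift]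
    nlinarith
  · -- strict local min along γ₂
    have hmem : Set.Ioo (-δ) δ ∈ 𝓝 (0:ℝ) := Ioo_mem_nhds (by linarith) hδpos
    filter_upwards [mem_nhdsWithin_of_mem_nhds hmem, self_mem_nhdsWithin] with s hs hs0
    have hs0' : s ≠ 0 := hs0
    simp only [Function.comp_apply, msPath_f]
    have h0 : ((0:ℝ)) ^ n * Real.cos ((n:ℝ) * (-θ₁ + 0 ^ n)) = 0 := by
      rw [zero_pow (by omega)]; ring
    rw [h0]
    have habs : |s| < δ := abs_lt.mpr ⟨hs.1, hs.2⟩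
    have hsmall := ms_small n hn s habs
    have hsign := ms_sign n (by omega) (s ^ n) (pow_ne_zero n hs0') hsmall
    have : (n:ℝ) * (-θ₁ + s ^ n) = -(Real.pi / 2) + (n:ℝ) * s ^ n := by
      rw [mul_add, mul_neg, hmul]
    rw [this, ms_cos_shift']
    exact hsign

/-- Generalized monkey saddle: for `n ≥ 2`, the function `f(x, y) = Re((x + iy)^n)` has a
strict saddle point at the origin. -/
theorem generalized_monkey_saddle (n : ℕ) (hn : 2 ≤ n) :
    HasStrictSaddleAt Set.univ
      (fun q : ℝ × ℝ => (((q.1 : ℂ) + (q.2 : ℂ) * Complex.I) ^ n).re) (0, 0) := by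
  unfold HasStrictSaddleAt IsRegularPath IsStrictLocalMax IsStrictLocalMin
  exact generalized_monkey_saddle_aux n hn
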